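/- Let Ω, a_B, a : ℝ → ℝ³ be continuous, let R_z : ℝ → SO(3) be differentiable with Ṙ_z = R_z Ω_×, and let ξ, ν : ℝ → ℝ³ be differentiable with ξ̇ = −Ω_× ξ + ν and ν̇ = −Ω_× ν + a_B − R_zᵀ a. Let ξ̂, ν̂ : ℝ → ℝ³ and γ_z : ℝ → ℝ⁹ be differentiable observer states satisfying ξ̂̇ = −Ω_× ξ̂ + ν̂ + σ_ξ, ν̂̇ = −Ω_× ν̂ + a_B − vec⁻¹(γ_z) a + σ_ν, and γ̇_z = −(I₃ ⊗ Ω_×) γ_z + σ_γ, for continuous innovation terms σ_ξ, σ_ν : ℝ → ℝ³ and σ_γ : ℝ → ℝ⁹. Then the error x := (ξ − ξ̂, ν − ν̂, vec(R_zᵀ) − γ_z) ∈ ℝ^{15} satisfies the linear time-varying equation ẋ(t) = A(t) x(t) − σ(t), where A(t) := Ā(t) ⊗ I₃ − I₅ ⊗ Ω(t)_× with Ā(t) := [[0,1,0₁ₓ₃],[0,0,−a(t)ᵀ],[0₃ₓ₁,0₃ₓ₁,0₃ₓ₃]], and σ := (σ_ξ, σ_ν, σ_γ) ∈ ℝ^{15}.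 -/

import Mathlib

open Matrix
open scoped Kronecker

/-- For `ω ∈ ℝ³`, the skew-symmetric matrix `ω_×` with `ω_× v = ω × v`. -/
def skew (ω : Fin 3 → ℝ) : Matrix (Fin 3) (Fin 3) ℝ :=
  !![0, -ω 2, ω 1; ω 2, 0, -ω 0; -ω 1, ω 0, 0]

/-- The vectorization `vec : ℝ^{3×3} → ℝ⁹` stacking the columns of a matrix: `ℝ⁹` is
realized as `Fin 3 × Fin 3 → ℝ` with index `(j, i)` holding entry `N i j`. -/
def mvec (N : Matrix (Fin 3) (Fin 3) ℝ) : Fin 3 × Fin 3 → ℝ :=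
  fun p => N p.2 p.1

/-- The inverse `vec⁻¹ : ℝ⁹ → ℝ^{3×3}` of the vectorization operator. -/
def unvec (γ : Fin 3 × Fin 3 → ℝ) : Matrix (Fin 3) (Fin 3) ℝ :=
  Matrix.of fun i j => γ (j, i)

set_option maxHeartbeats 2000000 in
/-- Equation (12) of the paper: the estimation error
`x = (ξ − ξ̂, ν − ν̂, vec(R_zᵀ) − γ_z) ∈ ℝ^{15}` of the ambient-space observer obeys
the linear time-varying dynamics `ẋ = A(t)x − σ` with
`A(t) = Ā(t) ⊗ I₃ − I₅ ⊗ Ω(t)_×`.  `ℝ^{15}` is realized as `Fin 5 × Fin 3 → ℝ`,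
derivatives are componentwise, and the identity `vec⁻¹(γ)a = (aᵀ ⊗ I₃)γ` is part of
the claim. -/
theorem stmt14
    (Ω aB a : ℝ → Fin 3 → ℝ)
    (hΩ : Continuous Ω) (haB : Continuous aB) (ha : Continuous a)
    (Rz : ℝ → Matrix (Fin 3) (Fin 3) ℝ)
    (hRz_SO : ∀ t, (Rz t)ᵀ * Rz t = 1 ∧ (Rz t).det = 1)
    (hRz : ∀ t i j, HasDerivAt (fun u => Rz u i j) ((Rz t * skew (Ω t)) i j) t)
    (ξ ν : ℝ → Fin 3 → ℝ)
    (hξ : ∀ t i, HasDerivAt (fun u => ξ u i)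
      ((-(skew (Ω t))).mulVec (ξ t) i + ν t i) t)
    (hν : ∀ t i, HasDerivAt (fun u => ν u i)
      ((-(skew (Ω t))).mulVec (ν t) i + aB t i - (Rz t)ᵀ.mulVec (a t) i) t)
    (ξhat νhat : ℝ → Fin 3 → ℝ) (γz : ℝ → Fin 3 × Fin 3 → ℝ)
    (σξ σν : ℝ → Fin 3 → ℝ) (σγ : ℝ → Fin 3 × Fin 3 → ℝ)
    (hσξ : Continuous σξ) (hσν : Continuous σν) (hσγ : Continuous σγ)
    (hξhat : ∀ t i, HasDerivAt (fun u => ξhat u i)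
      ((-(skew (Ω t))).mulVec (ξhat t) i + νhat t i + σξ t i) t)
    (hνhat : ∀ t i, HasDerivAt (fun u => νhat u i)
      ((-(skew (Ω t))).mulVec (νhat t) i + aB t i
        - (unvec (γz t)).mulVec (a t) i + σν t i) t)
    (hγz : ∀ t p, HasDerivAt (fun u => γz u p)
      ((-(((1 : Matrix (Fin 3) (Fin 3) ℝ) ⊗ₖ skew (Ω t)).mulVec (γz t))) p + σγ t p) t)
    (Abar : ℝ → Matrix (Fin 5) (Fin 5) ℝ)
    (hAbar : ∀ t, Abar t =
      !![0, 1, 0, 0, 0;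
         0, 0, -a t 0, -a t 1, -a t 2;
         0, 0, 0, 0, 0;
         0, 0, 0, 0, 0;
         0, 0, 0, 0, 0])
    (x : ℝ → Fin 5 × Fin 3 → ℝ)
    (hx : ∀ t p, x t p =
      ![ξ t p.2 - ξhat t p.2,
        ν t p.2 - νhat t p.2,
        mvec ((Rz t)ᵀ) (0, p.2) - γz t (0, p.2),
        mvec ((Rz t)ᵀ) (1, p.2) - γz t (1, p.2),
        mvec ((Rz t)ᵀ) (2, p.2) - γz t (2, p.2)] p.1)
    (σ : ℝ → Fin 5 × Fin 3 → ℝ)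
    (hσ : ∀ t p, σ t p =
      ![σξ t p.2, σν t p.2, σγ t (0, p.2), σγ t (1, p.2), σγ t (2, p.2)] p.1) :
    -- the identity vec⁻¹(γ)w = (wᵀ ⊗ I₃)γ
    (∀ (γ : Fin 3 × Fin 3 → ℝ) (w : Fin 3 → ℝ) (i : Fin 3),
      (unvec γ).mulVec w i =
        (((Matrix.of fun (_ : Fin 1) (j : Fin 3) => w j)
          ⊗ₖ (1 : Matrix (Fin 3) (Fin 3) ℝ)).mulVec γ) ((0 : Fin 1), i))
    ∧
    -- the linear time-varying error dynamics ẋ = A(t)x − σ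
    (∀ t p, HasDerivAt (fun u => x u p)
      (((Abar t ⊗ₖ (1 : Matrix (Fin 3) (Fin 3) ℝ)
          - (1 : Matrix (Fin 5) (Fin 5) ℝ) ⊗ₖ skew (Ω t)).mulVec (x t)) p - σ t p) t) := by

  constructor
  · intro γ w i
    simp [unvec, Matrix.mulVec, dotProduct, Fintype.sum_prod_type,
      Fin.sum_univ_three, Matrix.one_apply, Matrix.kroneckerMap_apply]
    fin_cases i <;> simp <;> ring
  · intro t p
    obtain ⟨k, i⟩ := p
    have hfun : ∀ k : Fin 5, (fun u => x u (k, i)) = fun u =>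
        ![ξ u i - ξhat u i,
          ν u i - νhat u i,
          mvec ((Rz u)ᵀ) (0, i) - γz u (0, i),
          mvec ((Rz u)ᵀ) (1, i) - γz u (1, i),
          mvec ((Rz u)ᵀ) (2, i) - γz u (2, i)] k := by
      intro k; funext u; exact hx u (k, i)
    have hRd : ∀ c : Fin 3, HasDerivAt (fun u => mvec ((Rz u)ᵀ) (c, i))
        ((Rz t * skew (Ω t)) c i) t := by
      intro c
      simpa [mvec, Matrix.transpose_apply] using hRz t c i
    have hxe : ∀ q, x t q =
        ![ξ t q.2 - ξhat t q.2,
          ν t q.2 - νhat t q.2,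
          mvec ((Rz t)ᵀ) (0, q.2) - γz t (0, q.2),
          mvec ((Rz t)ᵀ) (1, q.2) - γz t (1, q.2),
          mvec ((Rz t)ᵀ) (2, q.2) - γz t (2, q.2)] q.1 := hx t
    fin_cases k <;> beta_reduce
    · rw [show ((⟨0, by omega⟩ : Fin 5)) = (0 : Fin 5) from rfl, hfun 0]
      simp only [Matrix.cons_val_zero]
      have h : HasDerivAt (fun u => ξ u i - ξhat u i) _ t := (hξ t i).sub (hξhat t i)
      convert h using 1
      simp only [Matrix.mulVec, dotProduct, Fintype.sum_prod_type,
        Fin.sum_univ_three, Fin.sum_univ_five, Matrix.sub_apply,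
        Matrix.kroneckerMap_apply, Matrix.one_apply, hAbar t, hxe, hσ t]
      fin_cases i <;>
        simp [skew, mvec, Matrix.neg_apply, Matrix.vecHead, Matrix.vecTail] <;> ring
    · rw [show ((⟨1, by omega⟩ : Fin 5)) = (1 : Fin 5) from rfl, hfun 1]
      simp only [Matrix.cons_val_one, Matrix.head_cons, Matrix.cons_val_zero]
      have h : HasDerivAt (fun u => ν u i - νhat u i) _ t := (hν t i).sub (hνhat t i)
      convert h using 1
      simp only [Matrix.mulVec, dotProduct, Fintype.sum_prod_type,
        Fin.sum_univ_three, Fin.sum_univ_five, Matrix.sub_apply,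
        Matrix.kroneckerMap_apply, Matrix.one_apply, hAbar t, hxe, hσ t]
      fin_cases i <;>
        simp [skew, mvec, unvec, Matrix.neg_apply, Matrix.transpose_apply, Matrix.vecHead, Matrix.vecTail] <;> ring
    · rw [show ((⟨2, by omega⟩ : Fin 5)) = (2 : Fin 5) from rfl, hfun 2]
      simp only [Matrix.cons_val_two, Matrix.tail_cons, Matrix.head_cons]
      have h : HasDerivAt (fun u => mvec ((Rz u)ᵀ) (0, i) - γz u (0, i)) _ t := (hRd 0).sub (hγz t (0, i))
      convert h using 1
      simp only [Matrix.mulVec, dotProduct, Fintype.sum_prod_type,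
        Fin.sum_univ_three, Fin.sum_univ_five, Matrix.sub_apply, Matrix.mul_apply,
        Matrix.kroneckerMap_apply, Matrix.one_apply, hAbar t, hxe, hσ t]
      fin_cases i <;>
        simp [skew, mvec, Matrix.neg_apply, Matrix.transpose_apply, Pi.neg_apply, Matrix.vecHead, Matrix.vecTail, Matrix.mulVec, dotProduct, Fintype.sum_prod_type, Fin.sum_univ_three, Matrix.kroneckerMap_apply, Matrix.one_apply] <;> ring
    · rw [show ((⟨3, by omega⟩ : Fin 5)) = (3 : Fin 5) from rfl, hfun 3]
      simp only [Matrix.cons_val_three, Matrix.tail_cons, Matrix.head_cons]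
      have h : HasDerivAt (fun u => mvec ((Rz u)ᵀ) (1, i) - γz u (1, i)) _ t := (hRd 1).sub (hγz t (1, i))
      convert h using 1
      simp only [Matrix.mulVec, dotProduct, Fintype.sum_prod_type,
        Fin.sum_univ_three, Fin.sum_univ_five, Matrix.sub_apply, Matrix.mul_apply,
        Matrix.kroneckerMap_apply, Matrix.one_apply, hAbar t, hxe, hσ t]
      fin_cases i <;>
        simp [skew, mvec, Matrix.neg_apply, Matrix.transpose_apply, Pi.neg_apply, Matrix.vecHead, Matrix.vecTail, Matrix.mulVec, dotProduct, Fintype.sum_prod_type, Fin.sum_univ_three, Matrix.kroneckerMap_apply, Matrix.one_apply] <;> ring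
    · rw [show ((⟨4, by omega⟩ : Fin 5)) = (4 : Fin 5) from rfl, hfun 4]
      simp only [Matrix.cons_val_four, Matrix.tail_cons, Matrix.head_cons]
      have h : HasDerivAt (fun u => mvec ((Rz u)ᵀ) (2, i) - γz u (2, i)) _ t := (hRd 2).sub (hγz t (2, i))
      convert h using 1
      simp only [Matrix.mulVec, dotProduct, Fintype.sum_prod_type,
        Fin.sum_univ_three, Fin.sum_univ_five, Matrix.sub_apply, Matrix.mul_apply,
        Matrix.kroneckerMap_apply, Matrix.one_apply, hAbar t, hxe, hσ t]
      fin_cases i <;>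
        simp [skew, mvec, Matrix.neg_apply, Matrix.transpose_apply, Pi.neg_apply, Matrix.vecHead, Matrix.vecTail, Matrix.mulVec, dotProduct, Fintype.sum_prod_type, Fin.sum_univ_three, Matrix.kroneckerMap_apply, Matrix.one_apply] <;> ring
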